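/- arXiv:2407.04124 — 3 statements merged into one kernel-verified Lean document; each statement's English description precedes it below -/
import Mathlib

section
/- Let $\mu$ be a regular positive Borel measure on $(0,\infty)$ with $\int_0^\infty 2^{-t}\,d\mu(t) < \infty$. If there is $D > 0$ such that $\widehat{\mu}(\ln n) \le D/\ln n$ for all integers $n \ge 2$, then the Helson matrix $H_\mu = (\widehat{\mu}(\ln(mn))/\sqrt{mn})_{m,n\ge 2}$ defines a bounded operator on $\ell^2(\mathbb N_2)$ with $\|H_\mu\| \le D\pi$. -/
open MeasureTheory
open scoped ENNReal NNReal

abbrev N2 := {n : ℕ // 2 ≤ n}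
noncomputable abbrev H2 := lp (fun _ : N2 => ℂ) 2

/-- The Laplace transform of a positive Borel measure on `(0,∞)`. -/
noncomputable def lap (μ : Measure ℝ) (s : ℝ) : ℝ :=
  (∫⁻ t in Set.Ioi (0:ℝ), ENNReal.ofReal (Real.exp (-s * t)) ∂μ).toReal

/-- The `(m,n)` entry of the Helson matrix `H_μ`, namely `μ̂(ln(mn))/√(mn)`. -/
noncomputable def helsonEntry (μ : Measure ℝ) (m n : N2) : ℂ :=
  (lap μ (Real.log ((m : ℝ) * (n : ℝ))) / Real.sqrt ((m : ℝ) * (n : ℝ)) : ℝ)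

noncomputable def e2 (m : N2) : H2 := lp.single 2 m 1

namespace HelsonAux

/-- auxiliary summand: `1/(x √(log x) (a + log x))`. -/
noncomputable def hfn (a x : ℝ) : ℝ := 1 / (x * Real.sqrt (Real.log x) * (a + Real.log x))

/-- antiderivative `2/√a · arctan(√(log x)/√a)`. -/
noncomputable def Gfn (a x : ℝ) : ℝ := 2 / Real.sqrt a * Real.arctan (Real.sqrt (Real.log x) / Real.sqrt a)

lemma Gfn_hasDerivAt {a x : ℝ} (ha : 0 < a) (hx : 1 < x) :
    HasDerivAt (Gfn a) (hfn a x) x := by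
  have hx0 : (0:ℝ) < x := lt_trans one_pos hx
  have hl : 0 < Real.log x := Real.log_pos hx
  have hsa : 0 < Real.sqrt a := Real.sqrt_pos.2 ha
  have hsl : 0 < Real.sqrt (Real.log x) := Real.sqrt_pos.2 hl
  have h1 : HasDerivAt Real.log x⁻¹ x := Real.hasDerivAt_log (ne_of_gt hx0)
  have h2 : HasDerivAt Real.sqrt (1 / (2 * Real.sqrt (Real.log x))) (Real.log x) :=
    Real.hasDerivAt_sqrt (ne_of_gt hl)
  have h3 := (h2.comp x h1)
  have h4 : HasDerivAt (fun y => Real.sqrt (Real.log y) / Real.sqrt a)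
      ((1 / (2 * Real.sqrt (Real.log x)) * x⁻¹) / Real.sqrt a) x := h3.div_const _
  have h5 := (Real.hasDerivAt_arctan (Real.sqrt (Real.log x) / Real.sqrt a)).comp x h4
  have h6 := h5.const_mul (2 / Real.sqrt a)
  refine h6.congr_deriv ?_
  symm
  unfold hfn
  have hsl2 : Real.sqrt (Real.log x) ^ 2 = Real.log x := Real.sq_sqrt hl.le
  have hsa2 : Real.sqrt a ^ 2 = a := Real.sq_sqrt ha.le
  field_simp
  linear_combination hsa2 + hsl2

lemma hfn_nonneg {a : ℝ} (ha : 0 < a) {x : ℝ} (hx : 0 ≤ x) : 0 ≤ hfn a x := by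
  rcases le_or_gt 0 (Real.log x) with h | h
  · have : 0 < a + Real.log x := by linarith
    exact div_nonneg zero_le_one (by positivity)
  · simp [hfn, Real.sqrt_eq_zero_of_nonpos h.le]

lemma Gfn_le {a : ℝ} (ha : 0 < a) (x : ℝ) : Gfn a x ≤ Real.pi / Real.sqrt a := by
  have hsa : 0 < Real.sqrt a := Real.sqrt_pos.2 ha
  have := (Real.arctan_lt_pi_div_two (Real.sqrt (Real.log x) / Real.sqrt a)).le
  calc 2 / Real.sqrt a * Real.arctan (Real.sqrt (Real.log x) / Real.sqrt a)
      ≤ 2 / Real.sqrt a * (Real.pi / 2) := by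
        apply mul_le_mul_of_nonneg_left this (by positivity)
    _ = Real.pi / Real.sqrt a := by field_simp

lemma Gfn_continuousOn {a : ℝ} (ha : 0 < a) : ContinuousOn (Gfn a) (Set.Ici (1:ℝ)) := by
  intro x hx
  have hx0 : (0:ℝ) < x := lt_of_lt_of_le one_pos (le_of_eq rfl) |>.trans_le hx
  apply ContinuousAt.continuousWithinAt
  apply ContinuousAt.mul continuousAt_const
  apply Real.continuous_arctan.continuousAt.comp
  apply ContinuousAt.div_const
  exact (Real.continuous_sqrt.continuousAt).comp (Real.continuousAt_log (by positivity))

lemma telescope {a : ℝ} (ha : 0 < a) : ∀ M : ℕ, 1 ≤ M →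
    ∑ n ∈ Finset.Icc 2 M, hfn a n ≤ Gfn a M := by
  intro M hM
  induction M, hM using Nat.le_induction with
  | base => simp [Gfn, Real.log_one]
  | succ M hM ih =>
    rw [Finset.sum_Icc_succ_top (by omega)]
    have hMR : (1:ℝ) ≤ (M:ℝ) := by exact_mod_cast hM
    have hlt : (M:ℝ) < (M:ℝ) + 1 := by linarith
    obtain ⟨c, hc, hceq⟩ := exists_hasDerivAt_eq_slope (Gfn a) (hfn a) hlt
      ((Gfn_continuousOn ha).mono (by intro y hy; simp at hy ⊢; linarith [hy.1]))
      (fun y hy => Gfn_hasDerivAt ha (by simp at hy; linarith [hy.1]))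
    have hc1 : 1 < c := lt_of_le_of_lt hMR hc.1
    have hcM : c ≤ (M:ℝ) + 1 := hc.2.le
    have heq : Gfn a ((M:ℝ)+1) - Gfn a M = hfn a c := by
      rw [hceq]; field_simp; ring
    have hmono : hfn a ((M:ℝ)+1) ≤ hfn a c := by
      unfold hfn
      have hlc : 0 < Real.log c := Real.log_pos hc1
      have h1 : 0 < c * Real.sqrt (Real.log c) * (a + Real.log c) := by positivity
      apply one_div_le_one_div_of_le h1
      have hlog : Real.log c ≤ Real.log ((M:ℝ)+1) := Real.log_le_log (by linarith) hcM
      gcongr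
      all_goals first
        | positivity
        | linarith
        | exact Real.sqrt_le_sqrt hlog
    have cast1 : ((M+1 : ℕ):ℝ) = (M:ℝ)+1 := by push_cast; ring
    rw [cast1]
    linarith [ih]

lemma sum_hfn_le {a : ℝ} (ha : 0 < a) (s : Finset ℕ) (hs : ∀ n ∈ s, 2 ≤ n) :
    ∑ n ∈ s, hfn a n ≤ Real.pi / Real.sqrt a := by
  classical
  set M := max 1 (s.sup id) with hM
  have hsub : s ⊆ Finset.Icc 2 M := by
    intro n hn
    simp only [Finset.mem_Icc]
    exact ⟨hs n hn, le_max_of_le_right (Finset.le_sup (f := id) hn)⟩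
  calc ∑ n ∈ s, hfn a n ≤ ∑ n ∈ Finset.Icc 2 M, hfn a n := by
        apply Finset.sum_le_sum_of_subset_of_nonneg hsub
        intro i _ _; exact hfn_nonneg ha (Nat.cast_nonneg i)
    _ ≤ Gfn a M := telescope ha M (le_max_left _ _)
    _ ≤ Real.pi / Real.sqrt a := Gfn_le ha M

lemma ecs {ι : Type*} [Countable ι] (f g : ι → ℝ≥0∞) :
    (∑' i, f i * g i) ^ 2 ≤ (∑' i, f i ^ 2) * (∑' i, g i ^ 2) := by
  letI : MeasurableSpace ι := ⊤
  haveI : MeasurableSingletonClass ι := ⟨fun _ => trivial⟩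
  have hmf : Measurable f := fun s _ => trivial
  have hmg : Measurable g := fun s _ => trivial
  have hpq : (2:ℝ).HolderConjugate 2 := .two_two
  have H := ENNReal.lintegral_mul_le_Lp_mul_Lq (Measure.count (α := ι)) hpq
    hmf.aemeasurable hmg.aemeasurable
  rw [lintegral_count, lintegral_count, lintegral_count] at H
  have H2 : (∑' i, f i * g i) ≤
      ((∑' i, f i ^ 2) ^ ((1:ℝ)/2)) * ((∑' i, g i ^ 2) ^ ((1:ℝ)/2)) := by
    calc (∑' i, f i * g i) ≤ (∑' i, f i ^ (2:ℝ)) ^ (1/(2:ℝ)) * (∑' i, g i ^ (2:ℝ)) ^ (1/(2:ℝ)) := H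
      _ = _ := by
          congr 2 <;> · apply tsum_congr; intro i; rw [← ENNReal.rpow_natCast]; norm_num
  calc (∑' i, f i * g i) ^ 2 ≤
      (((∑' i, f i ^ 2) ^ ((1:ℝ)/2)) * ((∑' i, g i ^ 2) ^ ((1:ℝ)/2))) ^ 2 := by
        exact pow_le_pow_left₀ zero_le H2 2
    _ = (∑' i, f i ^ 2) * (∑' i, g i ^ 2) := by
        rw [mul_pow, ← ENNReal.rpow_natCast (_ ^ ((1:ℝ)/2)), ← ENNReal.rpow_natCast (_ ^ ((1:ℝ)/2)),
          ← ENNReal.rpow_mul, ← ENNReal.rpow_mul]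
        norm_num

noncomputable def Kre (μ : Measure ℝ) (m n : N2) : ℝ :=
  lap μ (Real.log ((m:ℝ) * (n:ℝ))) / Real.sqrt ((m:ℝ) * (n:ℝ))

noncomputable def pw (n : N2) : ℝ := 1 / (Real.sqrt n * Real.sqrt (Real.log n))

lemma two_le (n : N2) : (2:ℝ) ≤ (n:ℝ) := by exact_mod_cast n.2
lemma npos (n : N2) : (0:ℝ) < (n:ℝ) := lt_of_lt_of_le two_pos (two_le n)
lemma logn_pos (n : N2) : 0 < Real.log n := Real.log_pos (by linarith [two_le n])
lemma pw_pos (n : N2) : 0 < pw n := by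
  unfold pw
  have := npos n; have := logn_pos n
  positivity

lemma lap_nonneg (μ : Measure ℝ) (s : ℝ) : 0 ≤ lap μ s := ENNReal.toReal_nonneg

lemma Kre_nonneg (μ : Measure ℝ) (m n : N2) : 0 ≤ Kre μ m n := by
  unfold Kre
  exact div_nonneg (lap_nonneg μ _) (Real.sqrt_nonneg _)

lemma Kre_symm (μ : Measure ℝ) (m n : N2) : Kre μ m n = Kre μ n m := by
  unfold Kre; rw [mul_comm]

lemma lap_le {μ : Measure ℝ} {D : ℝ}
    (hupper : ∀ n : N2, lap μ (Real.log n) ≤ D / Real.log n) (m n : N2) :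
    lap μ (Real.log ((m:ℝ) * (n:ℝ))) ≤ D / (Real.log m + Real.log n) := by
  have h2 : 2 ≤ m.1 * n.1 := by have := Nat.mul_le_mul m.2 n.2; omega
  have h := hupper ⟨m.1 * n.1, h2⟩
  have hc : ((⟨m.1 * n.1, h2⟩ : N2) : ℝ) = (m:ℝ) * (n:ℝ) := by push_cast; rfl
  rw [hc] at h
  calc lap μ (Real.log ((m:ℝ) * (n:ℝ))) ≤ D / Real.log ((m:ℝ) * (n:ℝ)) := h
    _ = D / (Real.log m + Real.log n) := by
        rw [Real.log_mul (ne_of_gt (npos m)) (ne_of_gt (npos n))]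

lemma key1 {μ : Measure ℝ} {D : ℝ}
    (hupper : ∀ n : N2, lap μ (Real.log n) ≤ D / Real.log n) (m n : N2) :
    Kre μ m n * pw n ≤ (D / Real.sqrt m) * hfn (Real.log m) n := by
  have hm := npos m; have hn := npos n
  have hlm := logn_pos m; have hln := logn_pos n
  have hsm : 0 < Real.sqrt (m:ℝ) := Real.sqrt_pos.2 hm
  have hsn : 0 < Real.sqrt (n:ℝ) := Real.sqrt_pos.2 hn
  have hsln : 0 < Real.sqrt (Real.log n) := Real.sqrt_pos.2 hln
  have hsum : 0 < Real.log m + Real.log n := by linarith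
  have hsqrtmul : Real.sqrt ((m:ℝ) * (n:ℝ)) = Real.sqrt m * Real.sqrt n :=
    Real.sqrt_mul hm.le _
  have hL := lap_le hupper m n
  have hL0 := lap_nonneg μ (Real.log ((m:ℝ) * (n:ℝ)))
  unfold Kre pw hfn
  rw [hsqrtmul]
  have hsqn : Real.sqrt (n:ℝ) * Real.sqrt (n:ℝ) = (n:ℝ) := Real.mul_self_sqrt hn.le
  calc lap μ (Real.log ((m:ℝ) * (n:ℝ))) / (Real.sqrt m * Real.sqrt n) *
        (1 / (Real.sqrt n * Real.sqrt (Real.log n)))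
      = lap μ (Real.log ((m:ℝ) * (n:ℝ))) *
        (1 / (Real.sqrt m * ((n:ℝ) * Real.sqrt (Real.log n)))) := by
        have hx : (Real.sqrt m * Real.sqrt n) * (Real.sqrt n * Real.sqrt (Real.log n))
            = Real.sqrt m * ((n:ℝ) * Real.sqrt (Real.log n)) := by
          calc (Real.sqrt m * Real.sqrt n) * (Real.sqrt n * Real.sqrt (Real.log n))
              = Real.sqrt m * ((Real.sqrt n * Real.sqrt n) * Real.sqrt (Real.log n)) := by ring
            _ = _ := by rw [hsqn]
        rw [div_mul_div_comm, mul_one, hx, div_eq_mul_one_div]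
    _ ≤ (D / (Real.log m + Real.log n)) *
        (1 / (Real.sqrt m * ((n:ℝ) * Real.sqrt (Real.log n)))) := by
        apply mul_le_mul_of_nonneg_right hL (by positivity)
    _ = (D / Real.sqrt m) *
        (1 / ((n:ℝ) * Real.sqrt (Real.log n) * (Real.log m + Real.log n))) := by
        rw [div_mul_div_comm, div_mul_div_comm, mul_one]
        ring

lemma crude {μ : Measure ℝ} {D : ℝ} (hD : 0 < D)
    (hupper : ∀ n : N2, lap μ (Real.log n) ≤ D / Real.log n) (m n : N2) :
    Kre μ m n ≤ (D / (Real.sqrt 2 * Real.sqrt (Real.log 2))) * pw n := by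
  have hm := npos m; have hn := npos n
  have hlm := logn_pos m; have hln := logn_pos n
  have hsm : 0 < Real.sqrt (m:ℝ) := Real.sqrt_pos.2 hm
  have hsn : 0 < Real.sqrt (n:ℝ) := Real.sqrt_pos.2 hn
  have hsln : 0 < Real.sqrt (Real.log n) := Real.sqrt_pos.2 hln
  have hl2 : (0:ℝ) < Real.log 2 := Real.log_pos one_lt_two
  have hsl2 : 0 < Real.sqrt (Real.log 2) := Real.sqrt_pos.2 hl2
  have hsum : 0 < Real.log m + Real.log n := by linarith
  have hL := lap_le hupper m n
  have hL0 := lap_nonneg μ (Real.log ((m:ℝ) * (n:ℝ)))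
  have hsqrtmul : Real.sqrt ((m:ℝ) * (n:ℝ)) = Real.sqrt m * Real.sqrt n :=
    Real.sqrt_mul hm.le _
  unfold Kre pw
  rw [hsqrtmul]
  have h1 : Real.sqrt 2 ≤ Real.sqrt (m:ℝ) := Real.sqrt_le_sqrt (two_le m)
  have h2 : Real.sqrt (Real.log 2) * Real.sqrt (Real.log n) ≤ Real.log m + Real.log n := by
    have hle : Real.sqrt (Real.log 2) ≤ Real.sqrt (Real.log n) :=
      Real.sqrt_le_sqrt (Real.log_le_log two_pos (two_le n))
    have h3 : Real.sqrt (Real.log 2) * Real.sqrt (Real.log n) ≤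
        Real.sqrt (Real.log n) * Real.sqrt (Real.log n) :=
      mul_le_mul_of_nonneg_right hle (Real.sqrt_nonneg _)
    rw [Real.mul_self_sqrt hln.le] at h3
    linarith
  calc lap μ (Real.log ((m:ℝ) * (n:ℝ))) / (Real.sqrt m * Real.sqrt n)
      ≤ (D / (Real.log m + Real.log n)) / (Real.sqrt m * Real.sqrt n) := by gcongr
    _ = D / ((Real.log m + Real.log n) * (Real.sqrt m * Real.sqrt n)) := by
        rw [div_div]
    _ ≤ D / ((Real.sqrt (Real.log 2) * Real.sqrt (Real.log n)) * (Real.sqrt 2 * Real.sqrt n)) := by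
        have hposB : 0 < (Real.sqrt (Real.log 2) * Real.sqrt (Real.log n)) *
            (Real.sqrt 2 * Real.sqrt n) :=
          mul_pos (mul_pos hsl2 hsln) (mul_pos (Real.sqrt_pos.2 two_pos) hsn)
        apply div_le_div_of_nonneg_left hD.le hposB ?_ |>.trans_eq rfl
        exact mul_le_mul h2 (mul_le_mul_of_nonneg_right h1 (Real.sqrt_nonneg _))
          (by positivity) hsum.le
    _ = (D / (Real.sqrt 2 * Real.sqrt (Real.log 2))) *
          (1 / (Real.sqrt n * Real.sqrt (Real.log n))) := by
        rw [div_mul_div_comm, mul_one]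
        ring

lemma rowReal {μ : Measure ℝ} {D : ℝ} (hD : 0 < D)
    (hupper : ∀ n : N2, lap μ (Real.log n) ≤ D / Real.log n) (m : N2) (s : Finset N2) :
    ∑ n ∈ s, Kre μ m n * pw n ≤ D * Real.pi * pw m := by
  classical
  have hlm := logn_pos m
  have hsm : 0 < Real.sqrt (m:ℝ) := Real.sqrt_pos.2 (npos m)
  have hslm : 0 < Real.sqrt (Real.log m) := Real.sqrt_pos.2 hlm
  calc ∑ n ∈ s, Kre μ m n * pw n
      ≤ ∑ n ∈ s, (D / Real.sqrt m) * hfn (Real.log m) n :=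
        Finset.sum_le_sum fun n _ => key1 hupper m n
    _ = (D / Real.sqrt m) * ∑ n ∈ s, hfn (Real.log m) ((n : ℕ):ℝ) := by
        rw [Finset.mul_sum]
    _ = (D / Real.sqrt m) *
          ∑ n ∈ s.map ⟨Subtype.val, Subtype.val_injective⟩, hfn (Real.log m) (n:ℝ) := by
        rw [Finset.sum_map]; rfl
    _ ≤ (D / Real.sqrt m) * (Real.pi / Real.sqrt (Real.log m)) := by
        apply mul_le_mul_of_nonneg_left _ (by positivity)
        apply sum_hfn_le hlm
        intro n hn
        simp only [Finset.mem_map, Function.Embedding.coeFn_mk] at hn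
        obtain ⟨a, _, rfl⟩ := hn
        exact a.2
    _ = D * Real.pi * pw m := by
        unfold pw
        rw [div_mul_div_comm, mul_one_div]

lemma rowE {μ : Measure ℝ} {D : ℝ} (hD : 0 < D)
    (hupper : ∀ n : N2, lap μ (Real.log n) ≤ D / Real.log n) (m : N2) :
    ∑' n : N2, ENNReal.ofReal (Kre μ m n) * ENNReal.ofReal (pw n) ≤
      ENNReal.ofReal (D * Real.pi) * ENNReal.ofReal (pw m) := by
  rw [ENNReal.tsum_eq_iSup_sum]
  apply iSup_le
  intro s
  calc ∑ n ∈ s, ENNReal.ofReal (Kre μ m n) * ENNReal.ofReal (pw n)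
      = ENNReal.ofReal (∑ n ∈ s, Kre μ m n * pw n) := by
        rw [ENNReal.ofReal_sum_of_nonneg]
        · apply Finset.sum_congr rfl
          intro n _
          rw [ENNReal.ofReal_mul (Kre_nonneg μ m n)]
        · intro n _
          exact mul_nonneg (Kre_nonneg μ m n) (pw_pos n).le
    _ ≤ ENNReal.ofReal (D * Real.pi * pw m) := by
        exact ENNReal.ofReal_le_ofReal (rowReal hD hupper m s)
    _ = ENNReal.ofReal (D * Real.pi) * ENNReal.ofReal (pw m) := by
        rw [ENNReal.ofReal_mul (by positivity)]

lemma half_sq (x : ℝ≥0∞) : (x ^ ((1:ℝ)/2)) ^ 2 = x := by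
  rw [← ENNReal.rpow_natCast (x ^ ((1:ℝ)/2)) 2, ← ENNReal.rpow_mul]
  norm_num

lemma half_mul_half (x : ℝ≥0∞) : x ^ ((1:ℝ)/2) * x ^ ((1:ℝ)/2) = x := by
  rw [← ENNReal.rpow_add_of_nonneg _ _ (by norm_num) (by norm_num)]
  norm_num

noncomputable def eK (μ : Measure ℝ) (m n : N2) : ℝ≥0∞ := ENNReal.ofReal (Kre μ m n)
noncomputable def eP (n : N2) : ℝ≥0∞ := ENNReal.ofReal (pw n)

lemma eP_ne_zero (n : N2) : eP n ≠ 0 := by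
  simp only [eP, ne_eq, ENNReal.ofReal_eq_zero, not_le]
  exact pw_pos n

lemma eP_ne_top (n : N2) : eP n ≠ ⊤ := ENNReal.ofReal_ne_top

lemma step1 {μ : Measure ℝ} {D : ℝ} (hD : 0 < D)
    (hupper : ∀ n : N2, lap μ (Real.log n) ≤ D / Real.log n) (n : N2) (a : N2 → ℝ≥0∞) :
    (∑' m, eK μ n m * a m) ^ 2 ≤
      (ENNReal.ofReal (D * Real.pi) * eP n) * (∑' m, eK μ n m * a m ^ 2 * (eP m)⁻¹) := by
  set f : N2 → ℝ≥0∞ := fun m => (eK μ n m) ^ ((1:ℝ)/2) * (eP m) ^ ((1:ℝ)/2) with hf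
  set g : N2 → ℝ≥0∞ := fun m => (eK μ n m) ^ ((1:ℝ)/2) * a m * ((eP m) ^ ((1:ℝ)/2))⁻¹ with hg
  have hPhalf_ne_zero : ∀ m : N2, (eP m) ^ ((1:ℝ)/2) ≠ 0 := fun m => by
    simp [ENNReal.rpow_eq_zero_iff, eP_ne_zero m, eP_ne_top m]
  have hPhalf_ne_top : ∀ m : N2, (eP m) ^ ((1:ℝ)/2) ≠ ⊤ := fun m => by
    simp [ENNReal.rpow_eq_top_iff, eP_ne_zero m, eP_ne_top m]
  have hfg : ∀ m, f m * g m = eK μ n m * a m := by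
    intro m
    simp only [hf, hg]
    calc (eK μ n m) ^ ((1:ℝ)/2) * (eP m) ^ ((1:ℝ)/2) *
          ((eK μ n m) ^ ((1:ℝ)/2) * a m * ((eP m) ^ ((1:ℝ)/2))⁻¹)
        = ((eK μ n m) ^ ((1:ℝ)/2) * (eK μ n m) ^ ((1:ℝ)/2)) * a m *
          ((eP m) ^ ((1:ℝ)/2) * ((eP m) ^ ((1:ℝ)/2))⁻¹) := by ring
      _ = eK μ n m * a m := by
          rw [half_mul_half, ENNReal.mul_inv_cancel (hPhalf_ne_zero m) (hPhalf_ne_top m), mul_one]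
  have hf2 : ∀ m, f m ^ 2 = eK μ n m * eP m := by
    intro m
    simp only [hf]
    rw [mul_pow, half_sq, half_sq]
  have hg2 : ∀ m, g m ^ 2 = eK μ n m * a m ^ 2 * (eP m)⁻¹ := by
    intro m
    simp only [hg]
    rw [mul_pow, mul_pow, half_sq, ← ENNReal.inv_pow, half_sq]
  calc (∑' m, eK μ n m * a m) ^ 2
      = (∑' m, f m * g m) ^ 2 := by
        congr 1; exact (tsum_congr hfg).symm
    _ ≤ (∑' m, f m ^ 2) * (∑' m, g m ^ 2) := ecs f g
    _ = (∑' m, eK μ n m * eP m) * (∑' m, eK μ n m * a m ^ 2 * (eP m)⁻¹) := by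
        rw [tsum_congr hf2, tsum_congr hg2]
    _ ≤ (ENNReal.ofReal (D * Real.pi) * eP n) * (∑' m, eK μ n m * a m ^ 2 * (eP m)⁻¹) := by
        apply mul_le_mul_left
        exact rowE hD hupper n

lemma step2 {μ : Measure ℝ} {D : ℝ} (hD : 0 < D)
    (hupper : ∀ n : N2, lap μ (Real.log n) ≤ D / Real.log n) (a : N2 → ℝ≥0∞) :
    ∑' n, (∑' m, eK μ n m * a m) ^ 2 ≤
      (ENNReal.ofReal (D * Real.pi)) ^ 2 * ∑' m, a m ^ 2 := by
  set C := ENNReal.ofReal (D * Real.pi) with hC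
  calc ∑' n, (∑' m, eK μ n m * a m) ^ 2
      ≤ ∑' n, (C * eP n) * (∑' m, eK μ n m * a m ^ 2 * (eP m)⁻¹) :=
        ENNReal.tsum_le_tsum fun n => step1 hD hupper n a
    _ = C * ∑' n, ∑' m, eP n * (eK μ n m * a m ^ 2 * (eP m)⁻¹) := by
        rw [← ENNReal.tsum_mul_left]
        apply tsum_congr; intro n
        rw [← ENNReal.tsum_mul_left, ← ENNReal.tsum_mul_left]
        apply tsum_congr; intro m
        ring
    _ = C * ∑' m, ∑' n, eP n * (eK μ n m * a m ^ 2 * (eP m)⁻¹) := by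
        rw [ENNReal.tsum_comm]
    _ = C * ∑' m, (a m ^ 2 * (eP m)⁻¹) * ∑' n, eK μ m n * eP n := by
        congr 1
        apply tsum_congr; intro m
        rw [← ENNReal.tsum_mul_left]
        apply tsum_congr; intro n
        rw [show eK μ m n = eK μ n m by unfold eK; rw [Kre_symm]]
        ring
    _ ≤ C * ∑' m, (a m ^ 2 * (eP m)⁻¹) * (C * eP m) := by
        apply mul_le_mul_right
        apply ENNReal.tsum_le_tsum
        intro m
        exact mul_le_mul_right (rowE hD hupper m) _
    _ = C * ∑' m, C * a m ^ 2 := by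
        congr 1
        apply tsum_congr; intro m
        calc a m ^ 2 * (eP m)⁻¹ * (C * eP m)
            = C * a m ^ 2 * ((eP m)⁻¹ * eP m) := by ring
          _ = C * a m ^ 2 := by
              rw [ENNReal.inv_mul_cancel (eP_ne_zero m) (eP_ne_top m), mul_one]
    _ = C ^ 2 * ∑' m, a m ^ 2 := by
        rw [ENNReal.tsum_mul_left]
        ring

lemma crudeE {μ : Measure ℝ} {D : ℝ} (hD : 0 < D)
    (hupper : ∀ n : N2, lap μ (Real.log n) ≤ D / Real.log n) (n m : N2) (a : N2 → ℝ≥0∞) :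
    eK μ n m * a m ^ 2 * (eP m)⁻¹ ≤
      ENNReal.ofReal (D / (Real.sqrt 2 * Real.sqrt (Real.log 2))) * a m ^ 2 := by
  have h1 : eK μ n m ≤ ENNReal.ofReal (D / (Real.sqrt 2 * Real.sqrt (Real.log 2))) * eP m := by
    rw [eK, eP, ← ENNReal.ofReal_mul (by positivity)]
    exact ENNReal.ofReal_le_ofReal (crude hD hupper n m)
  calc eK μ n m * a m ^ 2 * (eP m)⁻¹
      ≤ (ENNReal.ofReal (D / (Real.sqrt 2 * Real.sqrt (Real.log 2))) * eP m) * a m ^ 2 * (eP m)⁻¹ := by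
        gcongr
    _ = ENNReal.ofReal (D / (Real.sqrt 2 * Real.sqrt (Real.log 2))) * a m ^ 2 *
          (eP m * (eP m)⁻¹) := by ring
    _ = _ := by rw [ENNReal.mul_inv_cancel (eP_ne_zero m) (eP_ne_top m), mul_one]

noncomputable def Tfun (μ : Measure ℝ) (x : N2 → ℂ) (n : N2) : ℂ :=
  ∑' m, (Kre μ n m : ℂ) * x m

lemma summable_norm_sq (x : H2) : Summable fun m => ‖x m‖ ^ 2 := by
  have h := (lp.memℓp x).summable (p := 2) (by norm_num)
  refine h.congr fun m => ?_
  norm_num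

lemma norm_sq_eq (x : H2) : ‖x‖ ^ 2 = ∑' m, ‖x m‖ ^ 2 := by
  have h := lp.norm_rpow_eq_tsum (p := 2) (by norm_num) x
  rw [show ((2:ℝ≥0∞).toReal) = (2:ℝ) by norm_num] at h
  rw [← Real.rpow_natCast ‖x‖ 2, show (((2:ℕ)):ℝ) = (2:ℝ) by norm_num, h]
  exact tsum_congr fun m => by rw [← Real.rpow_natCast ‖x m‖ 2]; norm_num

lemma A2_eq (x : H2) : ∑' m, (ENNReal.ofReal ‖x m‖) ^ 2 = ENNReal.ofReal (‖x‖ ^ 2) := by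
  rw [norm_sq_eq x, ENNReal.ofReal_tsum_of_nonneg (fun m => by positivity) (summable_norm_sq x)]
  exact tsum_congr fun m => by rw [ENNReal.ofReal_pow (norm_nonneg _)]

lemma A2_ne_top (x : H2) : (∑' m, (ENNReal.ofReal ‖x m‖) ^ 2) ≠ ⊤ := by
  rw [A2_eq x]; exact ENNReal.ofReal_ne_top

lemma row_ne_top {μ : Measure ℝ} {D : ℝ} (hD : 0 < D)
    (hupper : ∀ n : N2, lap μ (Real.log n) ≤ D / Real.log n) (x : H2) (n : N2) :
    (∑' m, eK μ n m * ENNReal.ofReal ‖x m‖) ≠ ⊤ := by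
  set a : N2 → ℝ≥0∞ := fun m => ENNReal.ofReal ‖x m‖ with ha
  have h1 := step1 hD hupper n a
  have h2 : (∑' m, eK μ n m * a m ^ 2 * (eP m)⁻¹) ≤
      ENNReal.ofReal (D / (Real.sqrt 2 * Real.sqrt (Real.log 2))) * ∑' m, a m ^ 2 := by
    rw [← ENNReal.tsum_mul_left]
    exact ENNReal.tsum_le_tsum fun m => crudeE hD hupper n m a
  have h3 : (∑' m, eK μ n m * a m) ^ 2 ≠ ⊤ := by
    apply ne_top_of_le_ne_top _ (h1.trans (mul_le_mul_right h2 _))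
    apply ENNReal.mul_ne_top (ENNReal.mul_ne_top ENNReal.ofReal_ne_top (eP_ne_top n))
    exact ENNReal.mul_ne_top ENNReal.ofReal_ne_top (A2_ne_top x)
  intro hcon
  rw [hcon] at h3
  simp at h3

lemma summable_norm_mul {μ : Measure ℝ} {D : ℝ} (hD : 0 < D)
    (hupper : ∀ n : N2, lap μ (Real.log n) ≤ D / Real.log n) (x : H2) (n : N2) :
    Summable fun m => Kre μ n m * ‖x m‖ := by
  have h := ENNReal.summable_toReal (row_ne_top hD hupper x n)
  refine h.congr fun m => ?_
  rw [ENNReal.toReal_mul, eK, ENNReal.toReal_ofReal (Kre_nonneg μ n m),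
    ENNReal.toReal_ofReal (norm_nonneg _)]

lemma summable_cmul {μ : Measure ℝ} {D : ℝ} (hD : 0 < D)
    (hupper : ∀ n : N2, lap μ (Real.log n) ≤ D / Real.log n) (x : H2) (n : N2) :
    Summable fun m => (Kre μ n m : ℂ) * x m := by
  apply Summable.of_norm
  refine (summable_norm_mul hD hupper x n).congr fun m => ?_
  rw [norm_mul, Complex.norm_real, Real.norm_eq_abs, abs_of_nonneg (Kre_nonneg μ n m)]

lemma Tfun_bound {μ : Measure ℝ} {D : ℝ} (hD : 0 < D)
    (hupper : ∀ n : N2, lap μ (Real.log n) ≤ D / Real.log n) (x : H2) (n : N2) :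
    ENNReal.ofReal ‖Tfun μ x n‖ ≤ ∑' m, eK μ n m * ENNReal.ofReal ‖x m‖ := by
  have hsum : Summable fun m => ‖(Kre μ n m : ℂ) * x m‖ := by
    refine (summable_norm_mul hD hupper x n).congr fun m => ?_
    rw [norm_mul, Complex.norm_real, Real.norm_eq_abs, abs_of_nonneg (Kre_nonneg μ n m)]
  have h1 : ‖Tfun μ x n‖ ≤ ∑' m, Kre μ n m * ‖x m‖ := by
    refine (norm_tsum_le_tsum_norm hsum).trans_eq (tsum_congr fun m => ?_)
    rw [norm_mul, Complex.norm_real, Real.norm_eq_abs, abs_of_nonneg (Kre_nonneg μ n m)]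
  calc ENNReal.ofReal ‖Tfun μ x n‖ ≤ ENNReal.ofReal (∑' m, Kre μ n m * ‖x m‖) :=
        ENNReal.ofReal_le_ofReal h1
    _ = ∑' m, eK μ n m * ENNReal.ofReal ‖x m‖ := by
        rw [ENNReal.ofReal_tsum_of_nonneg
          (fun m => mul_nonneg (Kre_nonneg μ n m) (norm_nonneg _))
          (summable_norm_mul hD hupper x n)]
        exact tsum_congr fun m => ENNReal.ofReal_mul (Kre_nonneg μ n m)

lemma master {μ : Measure ℝ} {D : ℝ} (hD : 0 < D)
    (hupper : ∀ n : N2, lap μ (Real.log n) ≤ D / Real.log n) (x : H2) :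
    ∑' n, ENNReal.ofReal (‖Tfun μ x n‖ ^ 2) ≤ ENNReal.ofReal ((D * Real.pi * ‖x‖) ^ 2) := by
  have hpi : (0:ℝ) < Real.pi := Real.pi_pos
  calc ∑' n, ENNReal.ofReal (‖Tfun μ x n‖ ^ 2)
      = ∑' n, (ENNReal.ofReal ‖Tfun μ x n‖) ^ 2 := by
        exact tsum_congr fun n => (ENNReal.ofReal_pow (norm_nonneg _) 2)
    _ ≤ ∑' n, (∑' m, eK μ n m * ENNReal.ofReal ‖x m‖) ^ 2 :=
        ENNReal.tsum_le_tsum fun n => pow_le_pow_left' (Tfun_bound hD hupper x n) 2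
    _ ≤ (ENNReal.ofReal (D * Real.pi)) ^ 2 * ∑' m, (ENNReal.ofReal ‖x m‖) ^ 2 :=
        step2 hD hupper _
    _ = ENNReal.ofReal ((D * Real.pi * ‖x‖) ^ 2) := by
        rw [A2_eq x, ← ENNReal.ofReal_pow (by positivity), ← ENNReal.ofReal_mul (by positivity)]
        congr 1
        ring

lemma memT {μ : Measure ℝ} {D : ℝ} (hD : 0 < D)
    (hupper : ∀ n : N2, lap μ (Real.log n) ≤ D / Real.log n) (x : H2) :
    Memℓp (Tfun μ x) 2 := by
  apply memℓp_gen
  have hne : (∑' n, ENNReal.ofReal (‖Tfun μ x n‖ ^ 2)) ≠ ⊤ :=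
    ne_top_of_le_ne_top ENNReal.ofReal_ne_top (master hD hupper x)
  have h := ENNReal.summable_toReal hne
  have h2 : Summable fun n => ‖Tfun μ x n‖ ^ 2 :=
    h.congr fun n => ENNReal.toReal_ofReal (by positivity)
  refine h2.congr fun n => ?_
  rw [show ((2:ℝ≥0∞).toReal) = (2:ℝ) by norm_num, ← Real.rpow_natCast ‖Tfun μ x n‖ 2]
  norm_num

lemma normT {μ : Measure ℝ} {D : ℝ} (hD : 0 < D)
    (hupper : ∀ n : N2, lap μ (Real.log n) ≤ D / Real.log n) (x : H2) (f : H2)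
    (hf : ⇑f = Tfun μ x) : ‖f‖ ≤ D * Real.pi * ‖x‖ := by
  have hpi : (0:ℝ) < Real.pi := Real.pi_pos
  apply lp.norm_le_of_tsum_le (p := 2) (by norm_num) (by positivity)
  have hsum2 : Summable fun n => ‖Tfun μ x n‖ ^ 2 := by
    have hne : (∑' n, ENNReal.ofReal (‖Tfun μ x n‖ ^ 2)) ≠ ⊤ :=
      ne_top_of_le_ne_top ENNReal.ofReal_ne_top (master hD hupper x)
    exact (ENNReal.summable_toReal hne).congr fun n =>
      ENNReal.toReal_ofReal (by positivity)
  have key : (∑' n, ‖Tfun μ x n‖ ^ 2) ≤ (D * Real.pi * ‖x‖) ^ 2 := by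
    have h1 : ENNReal.ofReal (∑' n, ‖Tfun μ x n‖ ^ 2) ≤
        ENNReal.ofReal ((D * Real.pi * ‖x‖) ^ 2) := by
      rw [ENNReal.ofReal_tsum_of_nonneg (fun n => by positivity) hsum2]
      exact master hD hupper x
    have := ENNReal.toReal_le_toReal ENNReal.ofReal_ne_top ENNReal.ofReal_ne_top |>.mpr h1
    rwa [ENNReal.toReal_ofReal (tsum_nonneg fun n => by positivity),
      ENNReal.toReal_ofReal (by positivity)] at this
  calc ∑' n, ‖f n‖ ^ (2:ℝ≥0∞).toReal = ∑' n, ‖Tfun μ x n‖ ^ 2 := by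
        refine tsum_congr fun n => ?_
        rw [hf, show ((2:ℝ≥0∞).toReal) = (2:ℝ) by norm_num,
          ← Real.rpow_natCast ‖Tfun μ x n‖ 2]
        norm_num
    _ ≤ (D * Real.pi * ‖x‖) ^ 2 := key
    _ = (D * Real.pi * ‖x‖) ^ (2:ℝ≥0∞).toReal := by
        rw [show ((2:ℝ≥0∞).toReal) = (2:ℝ) by norm_num,
          ← Real.rpow_natCast (D * Real.pi * ‖x‖) 2]
        norm_num

end HelsonAux

/-- If `μ̂(ln n) ≤ D/ln n` for all `n ≥ 2`, then the Helson matrix `H_μ` defines a bounded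
operator on `ℓ²(ℕ₂)` with norm at most `Dπ`. -/
theorem helson_bounded_of_upper (μ : Measure ℝ)
    (hμ : (∫⁻ t in Set.Ioi (0:ℝ), ENNReal.ofReal ((2:ℝ) ^ (-t)) ∂μ) < ⊤)
    (D : ℝ) (hD : 0 < D)
    (hupper : ∀ n : N2, lap μ (Real.log n) ≤ D / Real.log n) :
    ∃ T : H2 →L[ℂ] H2,
      (∀ m n : N2, T (e2 m) n = helsonEntry μ m n) ∧
      ‖T‖ ≤ D * Real.pi := by
  classical
  open HelsonAux in
  have hpi : (0:ℝ) < Real.pi := Real.pi_pos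
  let L : H2 →ₗ[ℂ] H2 :=
    { toFun := fun x => (⟨HelsonAux.Tfun μ x, HelsonAux.memT hD hupper x⟩ : H2)
      map_add' := by
        intro x y
        apply lp.ext
        funext n
        have hx := HelsonAux.summable_cmul hD hupper x n
        have hy := HelsonAux.summable_cmul hD hupper y n
        show HelsonAux.Tfun μ (x + y) n = HelsonAux.Tfun μ x n + HelsonAux.Tfun μ y n
        unfold HelsonAux.Tfun
        rw [← Summable.tsum_add hx hy]
        apply tsum_congr
        intro m
        show (HelsonAux.Kre μ n m : ℂ) * (x m + y m) = _
        rw [mul_add]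
      map_smul' := by
        intro c x
        apply lp.ext
        funext n
        show HelsonAux.Tfun μ (c • x) n = c * HelsonAux.Tfun μ x n
        unfold HelsonAux.Tfun
        rw [← tsum_mul_left]
        apply tsum_congr
        intro m
        show (HelsonAux.Kre μ n m : ℂ) * (c • (x m)) = _
        rw [smul_eq_mul]
        ring }
  have hLcoe : ∀ x : H2, ⇑(L x) = HelsonAux.Tfun μ x := fun x => rfl
  let T : H2 →L[ℂ] H2 := L.mkContinuous (D * Real.pi)
    (fun x => HelsonAux.normT hD hupper x (L x) (hLcoe x))
  refine ⟨T, ?_, ?_⟩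
  · intro m n
    have hT : T (e2 m) n = HelsonAux.Tfun μ (e2 m) n := rfl
    rw [hT]
    unfold HelsonAux.Tfun
    have hzero : ∀ k : N2, k ≠ m → (HelsonAux.Kre μ n k : ℂ) * (e2 m) k = 0 := by
      intro k hk
      have h0 : (e2 m) k = 0 := by
        unfold e2
        exact lp.single_apply_ne (E := fun _ : N2 => ℂ) 2 m 1 hk
      rw [h0, mul_zero]
    rw [tsum_eq_single m hzero]
    have h1 : (e2 m) m = 1 := by
      unfold e2
      exact lp.single_apply_self (E := fun _ : N2 => ℂ) 2 m 1
    rw [h1, mul_one]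
    unfold HelsonAux.Kre helsonEntry
    rw [mul_comm ((n:ℝ)) ((m:ℝ))]
  · exact L.mkContinuous_norm_le (by positivity) _
end

section
/- Let $\mu$ be a regular positive Borel measure on $(0,\infty)$ with $\int_0^\infty 2^{-t}\,d\mu(t) < \infty$. If the sequence $\{(\ln n)\,\widehat{\mu}(\ln n)\}_{n\ge 2}$ is unbounded, then the Helson matrix $H_\mu$ does not define a bounded operator on $\ell^2(\mathbb N_2)$. -/
open MeasureTheory

lemma exp_le_two_rpow {s t : ℝ} (hs : Real.log 2 ≤ s) (ht : 0 ≤ t) :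
    Real.exp (-s * t) ≤ (2:ℝ) ^ (-t) := by
  rw [Real.rpow_def_of_pos (by norm_num : (0:ℝ) < 2)]
  apply Real.exp_le_exp.2
  nlinarith [mul_nonneg (sub_nonneg.2 hs) ht]

lemma lint_le (μ : Measure ℝ) {s : ℝ} (hs : Real.log 2 ≤ s) :
    (∫⁻ t in Set.Ioi (0:ℝ), ENNReal.ofReal (Real.exp (-s * t)) ∂μ)
      ≤ ∫⁻ t in Set.Ioi (0:ℝ), ENNReal.ofReal ((2:ℝ) ^ (-t)) ∂μ := by
  have hm : Measurable fun t:ℝ => ENNReal.ofReal ((2:ℝ)^(-t)) := by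
    have he : (fun t:ℝ => ENNReal.ofReal ((2:ℝ)^(-t)))
        = fun t => ENNReal.ofReal (Real.exp (Real.log 2 * (-t))) := by
      funext t; rw [Real.rpow_def_of_pos (by norm_num : (0:ℝ) < 2)]
    rw [he]; fun_prop
  refine setLIntegral_mono hm ?_
  intro t ht
  exact ENNReal.ofReal_le_ofReal (exp_le_two_rpow hs ht.le)

lemma lint_mono (μ : Measure ℝ) {s s' : ℝ} (hss : s ≤ s') :
    (∫⁻ t in Set.Ioi (0:ℝ), ENNReal.ofReal (Real.exp (-s' * t)) ∂μ)
      ≤ ∫⁻ t in Set.Ioi (0:ℝ), ENNReal.ofReal (Real.exp (-s * t)) ∂μ := by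
  refine setLIntegral_mono (by fun_prop) ?_
  intro t ht
  apply ENNReal.ofReal_le_ofReal
  apply Real.exp_le_exp.2
  nlinarith [mul_nonneg (sub_nonneg.2 hss) ht.le]

lemma sum_Icc_inv_ge (M : ℕ) :
    Real.log (M+1) - 1 ≤ ∑ k ∈ Finset.Icc 2 M, ((k:ℝ))⁻¹ := by
  have h := log_add_one_le_harmonic M
  have h1 : (harmonic M : ℝ) = ∑ k ∈ Finset.Icc 1 M, ((k:ℝ))⁻¹ := by
    rw [harmonic_eq_sum_Icc]; push_cast; rfl
  have h2 : Finset.Icc 1 M = insert 1 (Finset.Icc 2 M) ∨ M = 0 := by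
    rcases Nat.eq_zero_or_pos M with h | h
    · right; exact h
    · left; ext x; simp only [Finset.mem_Icc, Finset.mem_insert]; omega
  rcases h2 with h2 | h2
  · have h3 : (1:ℕ) ∉ Finset.Icc 2 M := by simp
    rw [h1, h2, Finset.sum_insert h3] at h
    push_cast at h ⊢
    simp at h
    linarith
  · subst h2
    simp only [Finset.Icc_eq_empty_of_lt (by norm_num : (2:ℕ) > 0), Finset.sum_empty]
    have : Real.log (0+1) = 0 := by norm_num
    push_cast
    rw [zero_add, Real.log_one]
    norm_num

set_option maxHeartbeats 1000000
open ComplexConjugate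

/-- If `(ln n) μ̂(ln n)` is unbounded, then the Helson matrix `H_μ` does not define a bounded
operator on `ℓ²(ℕ₂)`. -/
theorem helson_unbounded (μ : Measure ℝ)
    (hμ : (∫⁻ t in Set.Ioi (0:ℝ), ENNReal.ofReal ((2:ℝ) ^ (-t)) ∂μ) < ⊤)
    (hunb : ∀ C : ℝ, ∃ n : N2, C < Real.log n * lap μ (Real.log n)) :
    ¬ ∃ T : H2 →L[ℂ] H2, ∀ m n : N2, T (e2 m) n = helsonEntry μ m n := by
  classical
  rintro ⟨T, hT⟩
  set B : ℝ := (∫⁻ t in Set.Ioi (0:ℝ), ENNReal.ofReal ((2:ℝ) ^ (-t)) ∂μ).toReal with hBdef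
  have hB0 : 0 ≤ B := ENNReal.toReal_nonneg
  have hlap_le_B : ∀ s : ℝ, Real.log 2 ≤ s → lap μ s ≤ B :=
    fun s hs => ENNReal.toReal_mono hμ.ne (lint_le μ hs)
  have hlap_anti : ∀ s s' : ℝ, Real.log 2 ≤ s → s ≤ s' → lap μ s' ≤ lap μ s :=
    fun s s' hs hss =>
      ENNReal.toReal_mono (lt_of_le_of_lt (lint_le μ hs) hμ).ne (lint_mono μ hss)
  have hlap0 : ∀ s : ℝ, 0 ≤ lap μ s := fun s => ENNReal.toReal_nonneg
  have hlog3 : (0:ℝ) ≤ Real.log 3 := Real.log_nonneg (by norm_num)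
  set C : ℝ := Real.log 3 * B + 2*‖T‖ + 2*B + 2 with hCdef
  have hCpos : (0:ℝ) < C := by positivity
  obtain ⟨n, hn⟩ := hunb C
  have hn2 : 2 ≤ (n:ℕ) := n.2
  have hnR : (2:ℝ) ≤ ((n:ℕ):ℝ) := by exact_mod_cast hn2
  have hnpos : (0:ℝ) < ((n:ℕ):ℝ) := by linarith
  have hlog2n : Real.log 2 ≤ Real.log ((n:ℕ):ℝ) := Real.log_le_log (by norm_num) hnR
  have hlapnB : lap μ (Real.log ((n:ℕ):ℝ)) ≤ B := hlap_le_B _ hlog2n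
  have hlapn0 : 0 ≤ lap μ (Real.log ((n:ℕ):ℝ)) := hlap0 _
  have hlogn0 : 0 < Real.log ((n:ℕ):ℝ) := Real.log_pos (by linarith)
  have hn' : C < Real.log ((n:ℕ):ℝ) * lap μ (Real.log ((n:ℕ):ℝ)) := hn
  have hCB : C < Real.log ((n:ℕ):ℝ) * B :=
    lt_of_lt_of_le hn' (mul_le_mul_of_nonneg_left hlapnB hlogn0.le)
  have hBpos : 0 < B := by
    by_contra hb
    push_neg at hb
    have : Real.log ((n:ℕ):ℝ) * B ≤ 0 := mul_nonpos_of_nonneg_of_nonpos hlogn0.le hb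
    linarith
  have hn4 : 4 ≤ (n:ℕ) := by
    have h0 : Real.log 3 * B ≤ C := by
      rw [hCdef]
      have hTnn := norm_nonneg T
      linarith
    have h1 : Real.log 3 * B < Real.log ((n:ℕ):ℝ) * B := lt_of_le_of_lt h0 hCB
    have h2 : Real.log 3 < Real.log ((n:ℕ):ℝ) := lt_of_mul_lt_mul_right h1 hB0
    have h3 : (3:ℝ) < ((n:ℕ):ℝ) :=
      (Real.log_lt_log_iff (by norm_num) hnpos).1 h2
    have : (3:ℕ) < (n:ℕ) := by exact_mod_cast h3
    omega
  set N : ℕ := (n:ℕ) with hNdef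
  set M : ℕ := Nat.sqrt N with hMdef
  have hM2 : 2 ≤ M := Nat.le_sqrt.2 (by omega)
  have hMMn : M * M ≤ N := Nat.sqrt_le N
  have hNlt : N < (M+1) * (M+1) := Nat.lt_succ_sqrt N
  -- the test vector
  set F : Finset N2 := (Finset.Icc 2 M).subtype (fun k => 2 ≤ k) with hFdef
  have hmemF : ∀ k : N2, k ∈ F ↔ (k:ℕ) ≤ M := by
    intro k
    simp [hFdef, Finset.mem_subtype, Finset.mem_Icc, k.2]
  set c : N2 → ℂ := fun k => (((Real.sqrt ((k:ℕ):ℝ))⁻¹ : ℝ) : ℂ) with hcdef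
  set x : H2 := ∑ k ∈ F, c k • e2 k with hxdef
  have hxco : ∀ j : N2, x j = if j ∈ F then c j else 0 := by
    intro j
    have h1 : x j = ∑ k ∈ F, (c k • e2 k) j := by
      rw [hxdef]
      rw [lp.coeFn_sum]
      simp [Finset.sum_apply]
    rw [h1]
    have key : ∀ k ∈ F, (c k • e2 k) j = if k = j then c j else 0 := by
      intro k _
      by_cases h : j = k
      · subst h
        simp [e2, lp.single_apply_self]
      · rw [if_neg (Ne.symm h)]
        simp [e2, lp.single_apply_ne _ _ _ h, Pi.single_apply, h]
    rw [Finset.sum_congr rfl key]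
    simp [Finset.sum_ite_eq']
  have hTx : ∀ j : N2, (T x) j = ∑ k ∈ F, c k * helsonEntry μ k j := by
    intro j
    have h1 : T x = ∑ k ∈ F, c k • T (e2 k) := by
      rw [hxdef, map_sum]
      exact Finset.sum_congr rfl (fun k _ => T.map_smul _ _)
    rw [h1, lp.coeFn_sum]
    rw [Finset.sum_apply]
    exact Finset.sum_congr rfl (fun k _ => by
      rw [lp.coeFn_smul, Pi.smul_apply, smul_eq_mul, hT k j])
  -- inner products as finite sums
  have hinner : @inner ℂ _ _ x (T x) = ∑ j ∈ F, conj (x j) * (T x) j := by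
    rw [lp.inner_eq_tsum]
    simp_rw [RCLike.inner_apply']
    refine tsum_eq_sum ?_
    intro j hj
    rw [hxco j, if_neg hj]
    simp
  have hinns : @inner ℂ _ _ x x = ∑ j ∈ F, conj (x j) * x j := by
    rw [lp.inner_eq_tsum]
    simp_rw [RCLike.inner_apply']
    refine tsum_eq_sum ?_
    intro j hj
    rw [hxco j, if_neg hj]
    simp
  set S : ℝ := ∑ k ∈ F, (((k:ℕ):ℝ))⁻¹ with hSdef
  have hsqrt_sq : ∀ k : N2, (Real.sqrt ((k:ℕ):ℝ))⁻¹ * (Real.sqrt ((k:ℕ):ℝ))⁻¹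
      = (((k:ℕ):ℝ))⁻¹ := by
    intro k
    rw [← mul_inv]
    rw [Real.mul_self_sqrt (by positivity)]
  -- norm of x
  have hxnorm : ‖x‖^2 = S := by
    have h1 : @inner ℂ _ _ x x = ((S:ℝ):ℂ) := by
      rw [hinns, hSdef]
      push_cast
      refine Finset.sum_congr rfl (fun j hj => ?_)
      rw [hxco j, if_pos hj, hcdef]
      simp only [Complex.conj_ofReal]
      rw [← Complex.ofReal_mul, hsqrt_sq j]
      push_cast
      ring
    have h2 := @inner_self_eq_norm_sq ℂ _ _ _ _ x
    rw [h1] at h2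
    simpa using h2.symm
  have hS2 : S = ∑ k ∈ Finset.Icc 2 M, ((k:ℝ))⁻¹ := by
    rw [hSdef, hFdef]
    exact Finset.sum_subtype_of_mem (p := fun k : ℕ => 2 ≤ k)
      (fun k : ℕ => ((k:ℝ))⁻¹) (fun k hk => (Finset.mem_Icc.1 hk).1)
  have hSpos : 0 < S := by
    rw [hS2]
    apply Finset.sum_pos
    · intro k hk
      have : 2 ≤ k := (Finset.mem_Icc.1 hk).1
      positivity
    · exact ⟨2, Finset.mem_Icc.2 ⟨le_refl 2, hM2⟩⟩
  -- lower bound for the quadratic form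
  have hlow : S * S * lap μ (Real.log ((N:ℕ):ℝ))
      ≤ (@inner ℂ _ _ x (T x)).re := by
    have h1 : @inner ℂ _ _ x (T x)
        = ((∑ j ∈ F, ∑ k ∈ F, (Real.sqrt ((j:ℕ):ℝ))⁻¹ *
            ((Real.sqrt ((k:ℕ):ℝ))⁻¹ *
              (lap μ (Real.log (((k:ℕ):ℝ) * ((j:ℕ):ℝ))) /
                Real.sqrt (((k:ℕ):ℝ) * ((j:ℕ):ℝ)))) : ℝ) : ℂ) := by
      rw [hinner]
      push_cast
      refine Finset.sum_congr rfl (fun j hj => ?_)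
      rw [hxco j, if_pos hj, hTx j, hcdef]
      simp only [Complex.conj_ofReal]
      rw [Finset.mul_sum]
      push_cast
      refine Finset.sum_congr rfl (fun k hk => ?_)
      rw [helsonEntry]
      push_cast
      ring
    rw [h1, Complex.ofReal_re]
    have h2 : ∀ j ∈ F, ∀ k ∈ F,
        (((k:ℕ):ℝ))⁻¹ * (((j:ℕ):ℝ))⁻¹ * lap μ (Real.log ((N:ℕ):ℝ))
          ≤ (Real.sqrt ((j:ℕ):ℝ))⁻¹ *
            ((Real.sqrt ((k:ℕ):ℝ))⁻¹ *
              (lap μ (Real.log (((k:ℕ):ℝ) * ((j:ℕ):ℝ))) /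
                Real.sqrt (((k:ℕ):ℝ) * ((j:ℕ):ℝ)))) := by
      intro j hj k hk
      have hk2 : (2:ℝ) ≤ ((k:ℕ):ℝ) := by exact_mod_cast k.2
      have hj2 : (2:ℝ) ≤ ((j:ℕ):ℝ) := by exact_mod_cast j.2
      have hkM : (k:ℕ) ≤ M := (hmemF k).1 hk
      have hjM : (j:ℕ) ≤ M := (hmemF j).1 hj
      have hkjN : (k:ℕ) * (j:ℕ) ≤ N :=
        le_trans (Nat.mul_le_mul hkM hjM) hMMn
      have hkjNR : ((k:ℕ):ℝ) * ((j:ℕ):ℝ) ≤ ((N:ℕ):ℝ) := by exact_mod_cast hkjN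
      have hkj2 : (2:ℝ) ≤ ((k:ℕ):ℝ) * ((j:ℕ):ℝ) := by nlinarith
      have hlap_ineq : lap μ (Real.log ((N:ℕ):ℝ))
          ≤ lap μ (Real.log (((k:ℕ):ℝ) * ((j:ℕ):ℝ))) := by
        apply hlap_anti
        · exact Real.log_le_log (by norm_num) hkj2
        · exact Real.log_le_log (by linarith) hkjNR
      have hform : (Real.sqrt ((j:ℕ):ℝ))⁻¹ *
            ((Real.sqrt ((k:ℕ):ℝ))⁻¹ *
              (lap μ (Real.log (((k:ℕ):ℝ) * ((j:ℕ):ℝ))) /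
                Real.sqrt (((k:ℕ):ℝ) * ((j:ℕ):ℝ))))
          = (((k:ℕ):ℝ))⁻¹ * (((j:ℕ):ℝ))⁻¹ *
              lap μ (Real.log (((k:ℕ):ℝ) * ((j:ℕ):ℝ))) := by
        rw [Real.sqrt_mul (by linarith : (0:ℝ) ≤ ((k:ℕ):ℝ)), div_eq_mul_inv, mul_inv]
        calc (Real.sqrt ((j:ℕ):ℝ))⁻¹ * ((Real.sqrt ((k:ℕ):ℝ))⁻¹ *
              (lap μ (Real.log (((k:ℕ):ℝ) * ((j:ℕ):ℝ))) *
                ((Real.sqrt ((k:ℕ):ℝ))⁻¹ * (Real.sqrt ((j:ℕ):ℝ))⁻¹)))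
            = ((Real.sqrt ((k:ℕ):ℝ))⁻¹ * (Real.sqrt ((k:ℕ):ℝ))⁻¹) *
              (((Real.sqrt ((j:ℕ):ℝ))⁻¹ * (Real.sqrt ((j:ℕ):ℝ))⁻¹)) *
              lap μ (Real.log (((k:ℕ):ℝ) * ((j:ℕ):ℝ))) := by ring
          _ = _ := by rw [hsqrt_sq k, hsqrt_sq j]
      rw [hform]
      apply mul_le_mul_of_nonneg_left hlap_ineq
      positivity
    calc S * S * lap μ (Real.log ((N:ℕ):ℝ))
        = ∑ j ∈ F, ∑ k ∈ F, (((k:ℕ):ℝ))⁻¹ * (((j:ℕ):ℝ))⁻¹ *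
            lap μ (Real.log ((N:ℕ):ℝ)) := by
          rw [hSdef, Finset.sum_mul_sum, Finset.sum_mul]
          refine Finset.sum_congr rfl (fun j hj => ?_)
          rw [Finset.sum_mul]
          refine Finset.sum_congr rfl (fun k hk => ?_)
          ring
      _ ≤ _ := by
          apply Finset.sum_le_sum
          intro j hj
          apply Finset.sum_le_sum
          intro k hk
          exact h2 j hj k hk
  -- upper bound
  have hup : (@inner ℂ _ _ x (T x)).re ≤ ‖T‖ * S := by
    calc (@inner ℂ _ _ x (T x)).re ≤ ‖@inner ℂ _ _ x (T x)‖ := by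
          exact Complex.re_le_norm _
      _ ≤ ‖x‖ * ‖T x‖ := norm_inner_le_norm x (T x)
      _ ≤ ‖x‖ * (‖T‖ * ‖x‖) := by
          apply mul_le_mul_of_nonneg_left (T.le_opNorm x) (norm_nonneg x)
      _ = ‖T‖ * ‖x‖^2 := by ring
      _ = ‖T‖ * S := by rw [hxnorm]
  -- combine
  have hkey : S * lap μ (Real.log ((N:ℕ):ℝ)) ≤ ‖T‖ := by
    have h := le_trans hlow hup
    have h2 : S * (S * lap μ (Real.log ((N:ℕ):ℝ))) ≤ S * ‖T‖ := by
      calc S * (S * lap μ (Real.log ((N:ℕ):ℝ)))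
          = S * S * lap μ (Real.log ((N:ℕ):ℝ)) := by ring
        _ ≤ ‖T‖ * S := h
        _ = S * ‖T‖ := by ring
    exact le_of_mul_le_mul_left h2 hSpos
  -- harmonic lower bound for S
  have hSlog : Real.log ((M:ℝ)+1) - 1 ≤ S := by
    rw [hS2]
    exact_mod_cast sum_Icc_inv_ge M
  have hloghalf : Real.log ((N:ℕ):ℝ) / 2 ≤ Real.log ((M:ℝ)+1) := by
    have h1 : ((N:ℕ):ℝ) < ((M:ℝ)+1)^2 := by
      have : ((N:ℕ):ℝ) < (((M+1)*(M+1) : ℕ):ℝ) := by exact_mod_cast hNlt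
      push_cast at this
      nlinarith
    have h2 : Real.log ((N:ℕ):ℝ) ≤ Real.log (((M:ℝ)+1)^2) :=
      Real.log_le_log hnpos h1.le
    rw [Real.log_pow] at h2
    push_cast at h2
    linarith
  -- final contradiction
  have hfin : C/2 - B ≤ ‖T‖ := by
    have h1 : (Real.log ((N:ℕ):ℝ)/2 - 1) * lap μ (Real.log ((N:ℕ):ℝ)) ≤ ‖T‖ := by
      calc (Real.log ((N:ℕ):ℝ)/2 - 1) * lap μ (Real.log ((N:ℕ):ℝ))
          ≤ S * lap μ (Real.log ((N:ℕ):ℝ)) := by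
            apply mul_le_mul_of_nonneg_right _ hlapn0
            linarith
        _ ≤ ‖T‖ := hkey
    nlinarith [hn', hlapnB, hlapn0]
  rw [hCdef] at hfin
  nlinarith [norm_nonneg T, mul_nonneg hlog3 hB0]
end

section
/- For $p > 0$, the Helson matrix with entries $\frac{\Gamma(p+1)}{\sqrt{mn}\,(\ln(mn))^{p+1}}$ for $m, n \ge 2$ (induced by the measure $t^p\,dt$) is a positive trace-class operator on $\ell^2(\mathbb N_2)$. -/
open MeasureTheory

open Set Real
open scoped ENNReal NNReal

/-- The kernel functions `t ↦ t^(p/2) m^(-1/2-t)` on `(0,∞)`. -/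
noncomputable def hker (p : ℝ) (m : N2) : ℝ → ℝ :=
  (Set.Ioi (0:ℝ)).indicator fun t => t ^ (p/2) * Real.exp ((-(1/2) - t) * Real.log (m:ℝ))

/-- The matrix entries. -/
noncomputable def aent (p : ℝ) (m n : N2) : ℝ :=
  Real.Gamma (p + 1) /
    (Real.sqrt ((m:ℝ) * (n:ℝ)) * Real.log ((m:ℝ) * (n:ℝ)) ^ (p + 1))

lemma N2.two_le (m : N2) : (2:ℝ) ≤ (m:ℝ) := by exact_mod_cast m.2

lemma N2.log_pos (m : N2) : 0 < Real.log (m:ℝ) :=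
  Real.log_pos (by linarith [N2.two_le m])

lemma N2.log_mul_pos (m n : N2) : 0 < Real.log ((m:ℝ) * (n:ℝ)) := by
  have hm := N2.two_le m; have hn := N2.two_le n
  apply Real.log_pos; nlinarith

lemma hker_mul (p : ℝ) (m n : N2) (t : ℝ) :
    hker p m t * hker p n t =
      (Set.Ioi (0:ℝ)).indicator
        (fun t => Real.exp (-(1/2) * Real.log ((m:ℝ) * (n:ℝ))) *
          (t ^ ((p+1)-1) * Real.exp (-(Real.log ((m:ℝ) * (n:ℝ)) * t)))) t := by
  have hm : (0:ℝ) < (m:ℝ) := by linarith [N2.two_le m]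
  have hn : (0:ℝ) < (n:ℝ) := by linarith [N2.two_le n]
  have hL : Real.log ((m:ℝ) * (n:ℝ)) = Real.log (m:ℝ) + Real.log (n:ℝ) :=
    Real.log_mul (ne_of_gt hm) (ne_of_gt hn)
  unfold hker
  by_cases ht : t ∈ Set.Ioi (0:ℝ)
  · rw [Set.indicator_of_mem ht, Set.indicator_of_mem ht, Set.indicator_of_mem ht, hL]
    have htpos : (0:ℝ) < t := ht
    have h1 : t ^ (p/2) * t ^ (p/2) = t ^ ((p+1)-1) := by
      rw [← Real.rpow_add htpos]; norm_num
    calc t ^ (p/2) * Real.exp ((-(1/2) - t) * Real.log (m:ℝ)) *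
          (t ^ (p/2) * Real.exp ((-(1/2) - t) * Real.log (n:ℝ)))
        = (t ^ (p/2) * t ^ (p/2)) *
            Real.exp ((-(1/2) - t) * Real.log (m:ℝ) + (-(1/2) - t) * Real.log (n:ℝ)) := by
          rw [Real.exp_add]; ring
      _ = t ^ ((p+1)-1) *
            Real.exp (-(1/2) * (Real.log (m:ℝ) + Real.log (n:ℝ)) +
              -((Real.log (m:ℝ) + Real.log (n:ℝ)) * t)) := by
          rw [h1]; congr 1; ring
      _ = Real.exp (-(1/2) * (Real.log (m:ℝ) + Real.log (n:ℝ))) *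
            (t ^ ((p+1)-1) *
              Real.exp (-((Real.log (m:ℝ) + Real.log (n:ℝ)) * t))) := by
          rw [Real.exp_add]; ring
  · rw [Set.indicator_of_notMem ht, Set.indicator_of_notMem ht, Set.indicator_of_notMem ht]
    ring

lemma integral_hker (p : ℝ) (hp : 0 < p) (m n : N2) :
    ∫ t, hker p m t * hker p n t = aent p m n := by
  have hL : 0 < Real.log ((m:ℝ) * (n:ℝ)) := N2.log_mul_pos m n
  have hq : (0:ℝ) < (m:ℝ) * (n:ℝ) := by nlinarith [N2.two_le m, N2.two_le n]
  simp_rw [hker_mul p m n]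
  rw [MeasureTheory.integral_indicator measurableSet_Ioi, MeasureTheory.integral_const_mul,
    Real.integral_rpow_mul_exp_neg_mul_Ioi (by linarith : (0:ℝ) < p + 1) hL]
  have e1 : Real.exp (-(1/2) * Real.log ((m:ℝ) * (n:ℝ))) = (Real.sqrt ((m:ℝ) * (n:ℝ)))⁻¹ := by
    rw [Real.sqrt_eq_rpow, ← Real.rpow_neg hq.le, Real.rpow_def_of_pos hq]
    congr 1; ring
  have e2 : ((1:ℝ) / Real.log ((m:ℝ) * (n:ℝ))) ^ (p+1) =
      (Real.log ((m:ℝ) * (n:ℝ)) ^ (p+1))⁻¹ := by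
    rw [one_div, Real.inv_rpow hL.le]
  rw [e1, e2, aent]
  have h1 : Real.sqrt ((m:ℝ) * (n:ℝ)) ≠ 0 := ne_of_gt (Real.sqrt_pos.mpr hq)
  have h2 : Real.log ((m:ℝ) * (n:ℝ)) ^ (p+1) ≠ 0 :=
    ne_of_gt (Real.rpow_pos_of_pos hL _)
  field_simp

lemma measurable_hker (p : ℝ) (m : N2) : Measurable (hker p m) := by
  apply Measurable.indicator ?_ measurableSet_Ioi
  fun_prop

lemma memℒp_hker (p : ℝ) (hp : 0 < p) (m : N2) :
    MemLp (fun t => (hker p m t : ℂ)) 2 (volume : Measure ℝ) := by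
  have hm : (0:ℝ) < (m:ℝ) := by linarith [N2.two_le m]
  have hlm : 0 < Real.log (m:ℝ) := N2.log_pos m
  suffices h : MemLp (hker p m) 2 (volume : Measure ℝ) from h.ofReal
  rw [memLp_two_iff_integrable_sq (measurable_hker p m).aestronglyMeasurable]
  have heq : (fun t => hker p m t ^ 2) =
      (Set.Ioi (0:ℝ)).indicator
        (fun t => Real.exp (-Real.log (m:ℝ)) *
          (t ^ ((p+1)-1) * Real.exp (-((2 * Real.log (m:ℝ)) * t)))) := by
    funext t
    unfold hker
    by_cases ht : t ∈ Set.Ioi (0:ℝ)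
    · rw [Set.indicator_of_mem ht, Set.indicator_of_mem ht]
      have htpos : (0:ℝ) < t := ht
      have h1 : t ^ (p/2) * t ^ (p/2) = t ^ ((p+1)-1) := by
        rw [← Real.rpow_add htpos]; norm_num
      calc (t ^ (p/2) * Real.exp ((-(1/2) - t) * Real.log (m:ℝ))) ^ 2
          = (t ^ (p/2) * t ^ (p/2)) *
              Real.exp ((-(1/2) - t) * Real.log (m:ℝ) + (-(1/2) - t) * Real.log (m:ℝ)) := by
            rw [Real.exp_add]; ring
        _ = t ^ ((p+1)-1) *
              Real.exp (-Real.log (m:ℝ) + -((2 * Real.log (m:ℝ)) * t)) := by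
            rw [h1]; congr 1; ring
        _ = Real.exp (-Real.log (m:ℝ)) *
              (t ^ ((p+1)-1) * Real.exp (-((2 * Real.log (m:ℝ)) * t))) := by
            rw [Real.exp_add]; ring
    · rw [Set.indicator_of_notMem ht, Set.indicator_of_notMem ht]; ring
  rw [heq, integrable_indicator_iff measurableSet_Ioi]
  apply Integrable.const_mul
  have hb : (0:ℝ) < 2 * Real.log (m:ℝ) := by linarith
  have h := integrableOn_rpow_mul_exp_neg_mul_rpow
    (show (-1:ℝ) < (p+1)-1 by linarith) (zero_lt_one (α := ℝ)) hb
  simp only [Real.rpow_one, neg_mul] at h ⊢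
  exact h

lemma summable_aent_diag (p : ℝ) (hp : 0 < p) :
    Summable (fun m : N2 => aent p m m) := by
  classical
  set F : ℕ → ℝ := fun n =>
    if n ≤ 1 then 1 / (2 * Real.log 2 ^ (p+1)) else 1 / (n * Real.log n ^ (p+1)) with hF
  have hlog2 : 0 < Real.log 2 := Real.log_pos one_lt_two
  have hden : ∀ a b : ℝ, 2 ≤ a → a ≤ b →
      1 / (b * Real.log b ^ (p+1)) ≤ 1 / (a * Real.log a ^ (p+1)) := by
    intro a b ha hab
    have ha0 : (0:ℝ) < a := by linarith
    have hla : 0 < Real.log a := Real.log_pos (by linarith)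
    apply one_div_le_one_div_of_le
    · positivity
    · apply mul_le_mul hab ?_ (by positivity) (by linarith)
      exact Real.rpow_le_rpow hla.le (Real.log_le_log ha0 hab) (by linarith)
  have hnn : ∀ n, 0 ≤ F n := by
    intro n
    rw [hF]; dsimp only
    split
    · positivity
    · have hln : 0 ≤ Real.log n := by
        rcases Nat.eq_zero_or_pos n with h | h
        · simp [h]
        · exact Real.log_nonneg (by exact_mod_cast h)
      have : 0 ≤ (n:ℝ) * Real.log n ^ (p+1) := by positivity
      positivity
  have hmono : ∀ ⦃a b : ℕ⦄, 0 < a → a ≤ b → F b ≤ F a := by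
    intro a b ha hab
    by_cases hb1 : b ≤ 1
    · have ha1 : a ≤ 1 := le_trans hab hb1
      rw [hF]; dsimp only; rw [if_pos hb1, if_pos ha1]
    · have hb2 : 2 ≤ b := by omega
      rw [hF]; dsimp only; rw [if_neg hb1]
      by_cases ha1 : a ≤ 1
      · rw [if_pos ha1]
        have h := hden 2 (b:ℝ) le_rfl (by exact_mod_cast hb2)
        simpa using h
      · rw [if_neg ha1]
        exact hden (a:ℝ) (b:ℝ) (by exact_mod_cast (by omega : 2 ≤ a)) (by exact_mod_cast hab)
  have hcond : Summable (fun k : ℕ => (2:ℝ)^k * F (2^k)) := by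
    rw [← summable_nat_add_iff 1]
    have base : Summable (fun k : ℕ => 1 / ((k:ℝ)+1) ^ (p+1)) := by
      have h0 : Summable (fun k : ℕ => 1 / (k:ℝ) ^ (p+1)) :=
        Real.summable_one_div_nat_rpow.mpr (by linarith)
      have h1 := (summable_nat_add_iff 1).mpr h0
      refine h1.congr fun k => ?_
      push_cast
      ring_nf
    refine ((base.mul_left ((Real.log 2 ^ (p+1))⁻¹)).congr ?_)
    intro k
    have h2k : ¬ ((2:ℕ)^(k+1) ≤ 1) := by
      have := Nat.one_lt_two_pow_iff.mpr (Nat.succ_ne_zero k)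
      omega
    rw [hF]; dsimp only; rw [if_neg h2k]
    have hcast : (((2:ℕ)^(k+1) : ℕ) : ℝ) = (2:ℝ)^(k+1) := by push_cast; ring
    rw [hcast, Real.log_pow]
    rw [Real.mul_rpow (by positivity) hlog2.le]
    have h2pos : (0:ℝ) < (2:ℝ)^(k+1) := by positivity
    have hk1 : (0:ℝ) < ((k:ℝ)+1) := by positivity
    have hne1 : ((k:ℝ)+1) ^ (p+1) ≠ 0 := ne_of_gt (Real.rpow_pos_of_pos hk1 _)
    have hne2 : Real.log 2 ^ (p+1) ≠ 0 := ne_of_gt (Real.rpow_pos_of_pos hlog2 _)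
    push_cast
    field_simp
  have hFs : Summable F := (summable_condensed_iff_of_nonneg hnn hmono).mp hcond
  have hsub : Summable (fun m : N2 => F (m : ℕ)) :=
    hFs.comp_injective Subtype.val_injective
  refine ((hsub.mul_left (Real.Gamma (p+1) / 2 ^ (p+1))).congr ?_)
  intro m
  have hm2 : (2:ℝ) ≤ (m:ℝ) := N2.two_le m
  have hm0 : (0:ℝ) < (m:ℝ) := by linarith
  have hlm : 0 < Real.log (m:ℝ) := N2.log_pos m
  rw [hF]; dsimp only
  rw [if_neg (by omega : ¬ ((m:ℕ) ≤ 1))]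
  rw [aent, Real.sqrt_mul_self hm0.le,
    Real.log_mul (ne_of_gt hm0) (ne_of_gt hm0), ← two_mul,
    Real.mul_rpow (by norm_num) hlm.le]
  have hne1 : ((2:ℝ)) ^ (p+1) ≠ 0 := ne_of_gt (Real.rpow_pos_of_pos (by norm_num) _)
  have hne2 : Real.log (m:ℝ) ^ (p+1) ≠ 0 := ne_of_gt (Real.rpow_pos_of_pos hlm _)
  field_simp

/-- For `p > 0`, the Helson matrix with entries `Γ(p+1)/(√(mn)(ln(mn))^{p+1})` (induced by
the measure `t^p dt`) is a bounded positive operator on `ℓ²(ℕ₂)` which is trace class (for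
a positive operator, trace class means that the diagonal entries in an orthonormal basis
are summable). -/
theorem helson_tpow_traceClass (p : ℝ) (hp : 0 < p) :
    ∃ T : H2 →L[ℂ] H2,
      (∀ m n : N2, T (e2 m) n =
        ((Real.Gamma (p + 1) /
          (Real.sqrt ((m:ℝ) * (n:ℝ)) * Real.log ((m:ℝ) * (n:ℝ)) ^ (p + 1)) : ℝ) : ℂ)) ∧
      (∀ x : H2, 0 ≤ (inner ℂ x (T x) : ℂ).re) ∧
      Summable (fun m : N2 => (inner ℂ (e2 m) (T (e2 m)) : ℂ).re) := by
  classical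
  -- the vectors `V m` in `L²(ℝ)`
  set V : N2 → (Lp ℂ 2 (volume : Measure ℝ)) := fun m => (memℒp_hker p hp m).toLp _ with hV
  have hVinner : ∀ m n : N2, (inner ℂ (V m) (V n) : ℂ) = ((aent p m n : ℝ) : ℂ) := by
    intro m n
    rw [MeasureTheory.L2.inner_def]
    have h1 := MemLp.coeFn_toLp (memℒp_hker p hp m)
    have h2 := MemLp.coeFn_toLp (memℒp_hker p hp n)
    calc (∫ a, (inner ℂ (V m a) (V n a) : ℂ))
        = ∫ a, ((hker p m a * hker p n a : ℝ) : ℂ) := by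
          refine integral_congr_ae ?_
          filter_upwards [h1, h2] with a e1 e2
          simp only [hV]
          rw [e1, e2, RCLike.inner_apply]
          push_cast
          rw [Complex.conj_ofReal]
          ring
      _ = ((∫ a, hker p m a * hker p n a : ℝ) : ℂ) := integral_ofReal
      _ = ((aent p m n : ℝ) : ℂ) := by rw [integral_hker p hp m n]
  have hnormsq : ∀ m : N2, ‖V m‖ ^ 2 = aent p m m := by
    intro m
    rw [← inner_self_eq_norm_sq (𝕜 := ℂ), hVinner m m]
    simp
  have hpq : (2:ℝ≥0∞).toReal.HolderConjugate (2:ℝ≥0∞).toReal := by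
    rw [ENNReal.toReal_ofNat]; exact Real.HolderConjugate.two_two
  -- the norm sequence as an ℓ² element
  have hWmem : Memℓp (fun m : N2 => ((‖V m‖ : ℝ) : ℂ)) 2 := by
    apply memℓp_gen
    refine ((summable_aent_diag p hp).congr ?_)
    intro m
    have hne : ‖((‖V m‖ : ℝ) : ℂ)‖ = ‖V m‖ :=
      (Complex.norm_real _).trans (abs_of_nonneg (norm_nonneg _))
    rw [ENNReal.toReal_ofNat, hne, show ((2:ℝ)) = ((2:ℕ):ℝ) by norm_num,
      Real.rpow_natCast, hnormsq m]
  set W : lp (fun _ : N2 => ℂ) 2 := ⟨_, hWmem⟩ with hW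
  have hCS : ∀ x : H2, Summable (fun m : N2 => ‖x m‖ * ‖V m‖) := by
    intro x
    have := lp.summable_mul hpq x W
    refine this.congr fun m => ?_
    congr 1
    exact (Complex.norm_real _).trans (abs_of_nonneg (norm_nonneg _))
  have hS : ∀ x : H2, Summable (fun m : N2 => x m • V m) := by
    intro x
    refine Summable.of_norm ((hCS x).congr fun m => ?_)
    rw [norm_smul]
  set Blin : H2 →ₗ[ℂ] (Lp ℂ 2 (volume : Measure ℝ)) :=
    { toFun := fun x => ∑' m, x m • V m
      map_add' := by
        intro x y
        simp only []
        rw [← Summable.tsum_add (hS x) (hS y)]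
        congr 1; funext m
        rw [lp.coeFn_add]; simp [add_smul]
      map_smul' := by
        intro c x
        simp only [RingHom.id_apply]
        rw [← ((hS x).hasSum.const_smul c).tsum_eq]
        congr 1; funext m
        rw [lp.coeFn_smul]; simp [smul_smul] } with hBlin
  have hbound : ∀ x : H2, ‖Blin x‖ ≤ ‖W‖ * ‖x‖ := by
    intro x
    have h1 : ‖Blin x‖ ≤ ∑' m, ‖x m • V m‖ := by
      apply norm_tsum_le_tsum_norm
      exact (hCS x).congr fun m => (norm_smul _ _).symm
    refine h1.trans ?_
    have h2 : ∑' m, ‖x m • V m‖ = ∑' m : N2, ‖x m‖ * ‖W m‖ := by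
      congr 1; funext m
      rw [norm_smul, hW]
      congr 1
      exact ((Complex.norm_real _).trans (abs_of_nonneg (norm_nonneg _))).symm
    rw [h2, mul_comm ‖W‖ ‖x‖]
    exact lp.tsum_mul_le_mul_norm' hpq x W
  set B : H2 →L[ℂ] (Lp ℂ 2 (volume : Measure ℝ)) := Blin.mkContinuous ‖W‖ hbound with hB
  have hBe : ∀ m : N2, B (e2 m) = V m := by
    intro m
    show ∑' k, (e2 m k) • V k = V m
    rw [tsum_eq_single m ?_]
    · simp only [e2]
      rw [lp.single_apply_self, one_smul]
    · intro k hk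
      simp only [e2]
      rw [lp.single_apply_ne 2 m 1 hk, zero_smul]
  refine ⟨(ContinuousLinearMap.adjoint B).comp B, ?_, ?_, ?_⟩
  · intro m n
    have hcoord : ((ContinuousLinearMap.adjoint B).comp B) (e2 m) n =
        inner ℂ (e2 n) (((ContinuousLinearMap.adjoint B).comp B) (e2 m)) := by
      simp only [e2]
      rw [lp.inner_single_left, RCLike.inner_apply, map_one, mul_one]
    rw [hcoord, ContinuousLinearMap.comp_apply, ContinuousLinearMap.adjoint_inner_right,
      hBe m, hBe n, hVinner n m]
    rw [show aent p n m = aent p m n by rw [aent, aent, mul_comm (n:ℝ) (m:ℝ)]]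
    rfl
  · intro x
    rw [ContinuousLinearMap.comp_apply, ContinuousLinearMap.adjoint_inner_right]
    simpa using inner_self_nonneg (𝕜 := ℂ) (x := B x)
  · refine (summable_aent_diag p hp).congr fun m => ?_
    rw [ContinuousLinearMap.comp_apply, ContinuousLinearMap.adjoint_inner_right,
      hBe m, hVinner m m, Complex.ofReal_re]
end
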